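/- arXiv:1408.6261 — 6 statements merged into one kernel-verified Lean document; each statement's English description precedes it below -/
import Mathlib

section
/- Let a, τ > 0 with τ ≤ a, let λ_k > 0, and let λ = x + iy be a complex number satisfying e^{-λτ} + λ²/λ_k + aλ = 0. Then x = Re(λ) < 0. -/
lemma abs_sin_lt_abs {t : ℝ} (ht : t ≠ 0) : |Real.sin t| < |t| := by
  have key : ∀ s : ℝ, 0 < s → |Real.sin s| < |s| := by
    intro s hs
    rw [abs_of_pos hs, abs_lt]
    constructor
    · rcases le_or_gt s 1 with h | h
      · have := Real.sin_pos_of_pos_of_lt_pi hs (lt_of_le_of_lt h (by linarith [Real.pi_gt_three]))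
        linarith
      · have := Real.neg_one_le_sin s
        linarith
    · exact Real.sin_lt hs
  rcases ht.lt_or_gt with h | h
  · have := key (-t) (by linarith)
    rwa [Real.sin_neg, abs_neg, abs_neg] at this
  · exact key t h

theorem stmt_0 (a τ lamk : ℝ) (ha : 0 < a) (hτ : 0 < τ) (hτa : τ ≤ a)
    (hk : 0 < lamk) (lam : ℂ)
    (heq : Complex.exp (-lam * τ) + lam ^ 2 / lamk + a * lam = 0) :
    lam.re < 0 := by
  by_contra hx
  push_neg at hx
  have hk' : (lamk : ℂ) ≠ 0 := by exact_mod_cast hk.ne'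
  have heq2 : (lamk:ℂ) * Complex.exp (-lam*τ) + lam^2 + (a*lamk : ℝ) * lam = 0 := by
    field_simp at heq
    push_cast
    rw [neg_mul]
    linear_combination heq
  set x := lam.re with hxdef
  set y := lam.im with hydef
  have hre := congrArg Complex.re heq2
  have him := congrArg Complex.im heq2
  simp [Complex.exp_re, Complex.exp_im, pow_two, Complex.mul_re, Complex.mul_im,
    Real.cos_neg, Real.sin_neg] at hre him
  rcases eq_or_ne lam.im 0 with hy | hy
  · rw [hy] at hre
    simp at hre
    nlinarith [mul_pos hk (Real.exp_pos (-(lam.re * τ))), mul_nonneg hx hx, mul_nonneg (mul_nonneg ha.le hk.le) hx]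
  · have hpos2 : 0 < 2 * lam.re + a * lamk := by nlinarith
    have hEpos := Real.exp_pos (-(lam.re * τ))
    have hE : Real.exp (-(lam.re * τ)) ≤ 1 := Real.exp_le_one_iff.mpr (by nlinarith)
    have h1 : |Real.sin (lam.im * τ)| < |lam.im| * τ := by
      have := abs_sin_lt_abs (mul_ne_zero hy hτ.ne')
      rwa [abs_mul, abs_of_pos hτ] at this
    have hyabs : 0 < |lam.im| := abs_pos.mpr hy
    have key0 : lam.im * (2 * lam.re + a * lamk)
        = lamk * (Real.exp (-(lam.re * τ)) * Real.sin (lam.im * τ)) := by linarith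
    have key : |lam.im| * (2 * lam.re + a * lamk) < lamk * (|lam.im| * a) := by
      calc |lam.im| * (2 * lam.re + a * lamk)
          = |lam.im * (2 * lam.re + a * lamk)| := by rw [abs_mul, abs_of_pos hpos2]
        _ = |lamk * (Real.exp (-(lam.re * τ)) * Real.sin (lam.im * τ))| := by rw [key0]
        _ = lamk * (Real.exp (-(lam.re * τ)) * |Real.sin (lam.im * τ)|) := by
            rw [abs_mul, abs_mul, abs_of_pos hk, abs_of_pos hEpos]
        _ ≤ lamk * |Real.sin (lam.im * τ)| :=
            mul_le_mul_of_nonneg_left (by nlinarith [abs_nonneg (Real.sin (lam.im * τ))]) hk.le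
        _ < lamk * (|lam.im| * τ) := mul_lt_mul_of_pos_left h1 hk
        _ ≤ lamk * (|lam.im| * a) :=
            mul_le_mul_of_nonneg_left (mul_le_mul_of_nonneg_left hτa (abs_nonneg _)) hk.le
    nlinarith [key, hyabs, mul_nonneg hx (le_of_lt hyabs)]
end

section
/- Let a, τ, λ_k > 0 and x, y real numbers with x ≥ 0 and y ≠ 0 satisfying -e^{-τx} sin(τy) + 2xy/λ_k + ay = 0. Then 2x/λ_k + a ≤ τ. -/
theorem stmt_1 (a τ lamk x y : ℝ) (ha : 0 < a) (hτ : 0 < τ) (hk : 0 < lamk)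
    (hx : 0 ≤ x) (hy : y ≠ 0)
    (heq : -Real.exp (-τ * x) * Real.sin (τ * y) + 2 * x * y / lamk + a * y = 0) :
    2 * x / lamk + a ≤ τ := by
  have hkey : (2 * x / lamk + a) * y = Real.exp (-τ * x) * Real.sin (τ * y) := by
    field_simp at heq ⊢; linarith
  have hpos : 0 < 2 * x / lamk + a := by positivity
  have habs : (2 * x / lamk + a) * |y| ≤ τ * |y| := by
    have h1 : |(2 * x / lamk + a) * y| = (2 * x / lamk + a) * |y| := by
      rw [abs_mul, abs_of_pos hpos]
    calc (2 * x / lamk + a) * |y| = |(2 * x / lamk + a) * y| := h1.symm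
      _ = Real.exp (-τ * x) * |Real.sin (τ * y)| := by
          rw [hkey, abs_mul, abs_of_pos (Real.exp_pos _)]
      _ ≤ 1 * |Real.sin (τ * y)| := by
          apply mul_le_mul_of_nonneg_right _ (abs_nonneg _)
          exact Real.exp_le_one_iff.2 (by nlinarith)
      _ = |Real.sin (τ * y)| := one_mul _
      _ ≤ |τ * y| := Real.abs_sin_le_abs
      _ = τ * |y| := by rw [abs_mul, abs_of_pos hτ]
  have : 0 < |y| := abs_pos.2 hy
  exact le_of_mul_le_mul_right habs this
end

section
/- Let a, τ, λ_k > 0 with τ ≤ a. If x ≥ 0 and y ≠ 0 satisfy -e^{-τx} sin(τy) + 2xy/λ_k + ay = 0, then τ = a, x = 0, and sin(τy) = τy; but sin(τy) = τy with y ≠ 0 is impossible, hence no such (x, y) exists. -/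
lemma key (a τ lamk : ℝ) (ha : 0 < a) (hτ : 0 < τ) (hk : 0 < lamk)
    (hτa : τ ≤ a) (x y : ℝ) (hx : 0 ≤ x) (hy : y ≠ 0)
    (heq : -Real.exp (-τ * x) * Real.sin (τ * y) + 2 * x * y / lamk + a * y = 0) :
    False := by
  have hE : Real.exp (-τ * x) ≤ 1 := by
    rw [Real.exp_le_one_iff]
    nlinarith
  have hEpos : 0 < Real.exp (-τ * x) := Real.exp_pos _
  have heq' : Real.exp (-τ * x) * Real.sin (τ * y) = 2 * x * y / lamk + a * y := by
    linarith
  have habs : |Real.exp (-τ * x) * Real.sin (τ * y)| < a * |y| := by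
    rw [abs_mul, abs_of_pos hEpos]
    calc Real.exp (-τ * x) * |Real.sin (τ * y)| ≤ 1 * |Real.sin (τ * y)| := by
          apply mul_le_mul_of_nonneg_right hE (abs_nonneg _)
      _ = |Real.sin (τ * y)| := one_mul _
      _ < |τ * y| := abs_sin_lt_abs (mul_ne_zero hτ.ne' hy)
      _ = τ * |y| := by rw [abs_mul, abs_of_pos hτ]
      _ ≤ a * |y| := by
          apply mul_le_mul_of_nonneg_right hτa (abs_nonneg _)
  have hrhs : a * |y| ≤ |2 * x * y / lamk + a * y| := by
    have : |2 * x * y / lamk + a * y| = (2 * x / lamk + a) * |y| := by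
      rw [show 2 * x * y / lamk + a * y = (2 * x / lamk + a) * y by ring, abs_mul,
        abs_of_pos (by positivity : (0:ℝ) < 2 * x / lamk + a)]
    rw [this]
    have : 0 ≤ 2 * x / lamk := by positivity
    nlinarith [abs_nonneg y]
  rw [heq'] at habs
  linarith

theorem stmt_2 (a τ lamk : ℝ) (ha : 0 < a) (hτ : 0 < τ) (hk : 0 < lamk)
    (hτa : τ ≤ a) :
    (∀ x y : ℝ, 0 ≤ x → y ≠ 0 →
      -Real.exp (-τ * x) * Real.sin (τ * y) + 2 * x * y / lamk + a * y = 0 →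
      τ = a ∧ x = 0 ∧ Real.sin (τ * y) = τ * y) ∧
    ¬ ∃ x y : ℝ, 0 ≤ x ∧ y ≠ 0 ∧
      -Real.exp (-τ * x) * Real.sin (τ * y) + 2 * x * y / lamk + a * y = 0 := by
  constructor
  · intro x y hx hy heq
    exact absurd heq (fun h => (key a τ lamk ha hτ hk hτa x y hx hy h).elim)
  · rintro ⟨x, y, hx, hy, heq⟩
    exact key a τ lamk ha hτ hk hτa x y hx hy heq
end

section
/- Let a, τ > 0 with τ ≤ a, and suppose x, y are real with e^{-τx} cos(τy) + ax = 0 and ay - e^{-τx} sin(τy) = 0. Then x < 0. -/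
theorem stmt_8 (a τ x y : ℝ) (ha : 0 < a) (hτ : 0 < τ) (hτa : τ ≤ a)
    (h1 : Real.exp (-τ * x) * Real.cos (τ * y) + a * x = 0)
    (h2 : a * y - Real.exp (-τ * x) * Real.sin (τ * y) = 0) :
    x < 0 := by
  by_contra hx
  push_neg at hx
  have hE : (0:ℝ) < Real.exp (-τ * x) := Real.exp_pos _
  have hE1 : Real.exp (-τ * x) ≤ 1 := by
    rw [Real.exp_le_one_iff]
    nlinarith
  -- cos(τ y) ≤ 0
  have hcos : Real.cos (τ * y) ≤ 0 := by nlinarith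
  have hsq : (a*x)^2 + (a*y)^2 = (Real.exp (-τ*x))^2 := by
    have e1 : a*x = -(Real.exp (-τ*x) * Real.cos (τ*y)) := by linarith
    have e2 : a*y = Real.exp (-τ*x) * Real.sin (τ*y) := by linarith
    rw [e1, e2]
    have := Real.sin_sq_add_cos_sq (τ * y)
    ring_nf
    nlinarith [this]
  have hay : (a*y)^2 ≤ 1 := by nlinarith
  have hty : (τ*y)^2 ≤ 1 := by nlinarith [mul_nonneg (mul_nonneg (sub_nonneg.mpr hτa) (by linarith : (0:ℝ) ≤ a + τ)) (sq_nonneg y)]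
  have habs : |τ*y| ≤ 1 := by
    rw [abs_le]
    constructor <;> nlinarith [sq_abs (τ*y), abs_nonneg (τ*y)]
  have hpi : (1:ℝ) < Real.pi / 2 := by
    have := Real.pi_gt_three; linarith
  have : 0 < Real.cos (τ * y) := by
    apply Real.cos_pos_of_mem_Ioo
    constructor
    · have := abs_le.mp habs; linarith [this.1]
    · have := abs_le.mp habs; linarith [this.2]
  linarith
end

section
/- Let a, τ > 0 with τ ≤ a. Then every complex solution λ of aλ + e^{-λτ} = 0 satisfies Re(λ) < 0. -/
theorem stmt_9 (a τ : ℝ) (ha : 0 < a) (hτ : 0 < τ) (hτa : τ ≤ a)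
    (lam : ℂ) (heq : a * lam + Complex.exp (-lam * τ) = 0) :
    lam.re < 0 := by
  by_contra h
  push_neg at h
  have hkey : (a : ℂ) * lam = -Complex.exp (-lam * τ) := by linear_combination heq
  -- modulus equation
  have habs : a * ‖lam‖ = Real.exp (-(lam.re * τ)) := by
    have := congrArg (‖·‖) hkey
    simpa [norm_mul, Complex.norm_exp, Complex.norm_real, Real.norm_eq_abs, abs_of_pos ha,
      Complex.neg_re, Complex.mul_re, Complex.ofReal_re, Complex.ofReal_im] using this
  have hexp_le : Real.exp (-(lam.re * τ)) ≤ 1 := by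
    rw [Real.exp_le_one_iff]
    nlinarith [mul_nonneg h hτ.le]
  have habs_le : ‖lam‖ ≤ 1 / a := by
    rw [le_div_iff₀ ha]
    nlinarith [habs]
  -- bound on imaginary part
  have him : |lam.im * τ| < Real.pi / 2 := by
    have h1 : |lam.im| ≤ ‖lam‖ := Complex.abs_im_le_norm lam
    have h2 : |lam.im * τ| ≤ 1 := by
      rw [abs_mul, abs_of_pos hτ]
      have : |lam.im| * τ ≤ (1 / a) * τ := by
        apply mul_le_mul_of_nonneg_right (h1.trans habs_le) hτ.le
      calc |lam.im| * τ ≤ (1 / a) * τ := this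
        _ ≤ 1 := by rw [div_mul_eq_mul_div, one_mul, div_le_one ha]; exact hτa
    have hpi : (1 : ℝ) < Real.pi / 2 := by
      have := Real.pi_gt_three
      linarith
    linarith
  have hcos : 0 < Real.cos (lam.im * τ) := by
    apply Real.cos_pos_of_mem_Ioo
    constructor
    · linarith [abs_lt.mp him |>.1]
    · linarith [abs_lt.mp him |>.2]
  -- real part equation
  have hre := congrArg Complex.re hkey
  rw [Complex.mul_re, Complex.neg_re, Complex.exp_re] at hre
  simp only [Complex.ofReal_re, Complex.ofReal_im, Complex.neg_re, Complex.neg_im,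
    Complex.mul_re, Complex.mul_im] at hre
  have e1 : -lam.re * τ - -lam.im * 0 = -(lam.re * τ) := by ring
  have e2 : -lam.re * 0 + -lam.im * τ = -(lam.im * τ) := by ring
  rw [e1, e2, Real.cos_neg] at hre
  have hre' : a * lam.re = -(Real.exp (-(lam.re * τ)) * Real.cos (lam.im * τ)) := by
    linarith [hre]
  nlinarith [Real.exp_pos (-(lam.re * τ)), mul_nonneg ha.le h]
end

section
/- Let a, τ, λ_k > 0 with τ < a. There is no real pair (x, y) with x ≥ 0 satisfying simultaneously e^{-τx} cos(τy) + (x² − y²)/λ_k + ax = 0 and −e^{-τx} sin(τy) + 2xy/λ_k + ay = 0. -/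
theorem stmt_16 (a τ lamk : ℝ) (ha : 0 < a) (hτ : 0 < τ) (hk : 0 < lamk)
    (hτa : τ < a) :
    ¬ ∃ x y : ℝ, 0 ≤ x ∧
      Real.exp (-τ * x) * Real.cos (τ * y) + (x ^ 2 - y ^ 2) / lamk + a * x = 0 ∧
      -Real.exp (-τ * x) * Real.sin (τ * y) + 2 * x * y / lamk + a * y = 0 := by
  rintro ⟨x, y, hx, h1, h2⟩
  have hexp : 0 < Real.exp (-τ * x) := Real.exp_pos _
  have hexp1 : Real.exp (-τ * x) ≤ 1 := by
    rw [Real.exp_le_one_iff]; nlinarith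
  rcases eq_or_ne y 0 with hy | hy
  · subst hy
    simp [Real.cos_zero] at h1
    have : 0 ≤ x ^ 2 / lamk := by positivity
    nlinarith [h1, Real.exp_pos (-(τ * x)), mul_nonneg ha.le hx]
  · -- y ≠ 0 case
    have key : |y * (2 * x / lamk + a)| ≤ τ * |y| := by
      have heq : y * (2 * x / lamk + a) = Real.exp (-τ * x) * Real.sin (τ * y) := by
        field_simp at h2 ⊢; nlinarith [h2]
      rw [heq, abs_mul, abs_of_pos hexp]
      calc Real.exp (-τ * x) * |Real.sin (τ * y)| ≤ 1 * |τ * y| := by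
            apply mul_le_mul hexp1 (Real.abs_sin_le_abs) (abs_nonneg _) zero_le_one
        _ = τ * |y| := by rw [one_mul, abs_mul, abs_of_pos hτ]
    have hpos : 0 < 2 * x / lamk + a := by positivity
    rw [abs_mul, abs_of_pos hpos] at key
    have hy' : 0 < |y| := abs_pos.mpr hy
    have : 2 * x / lamk + a ≤ τ := le_of_mul_le_mul_left (by linarith [key, mul_comm (|y|) (2 * x / lamk + a)]) hy'
    have : 0 ≤ 2 * x / lamk := by positivity
    linarith
end
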